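/- Let H = (M, n, R) be a constant-rate multi-mode system, S ⊆ ℝⁿ an open set, and x_s, x_t ∈ S. There exists a finite S-safe schedule steering H from x_s to x_t if and only if there exists, for some N ≥ 1, a witness channel ⟨c_1, c_2, …, c_N⟩ in S for (H, x_s, x_t). -/

import Mathlib

/-- The terminal state of the run of a schedule (a list of timed actions) from a state. -/
def runEnd {M V : Type*} [AddCommGroup V] [Module ℝ V] (R : M → V) : V → List (M × ℝ) → V
  | x, [] => x
  | x, (m, t) :: σ => runEnd R (x + t • R m) σ

/-- A schedule is `S`-safe from `x` if every point visited during its run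
(including along each timed action) lies in `S`. -/
def SafeSched {M V : Type*} [AddCommGroup V] [Module ℝ V] (R : M → V) (S : Set V) :
    V → List (M × ℝ) → Prop
  | _, [] => True
  | x, (m, t) :: σ =>
      (∀ τ ∈ Set.Icc (0 : ℝ) t, x + τ • R m ∈ S) ∧ SafeSched R S (x + t • R m) σ

/-- A cell of `S` is an open, convex subset of `S`. -/
def IsCell {n : ℕ} (S c : Set (Fin n → ℝ)) : Prop :=
  IsOpen c ∧ Convex ℝ c ∧ c ⊆ S

/-- `c 1, …, c N` is a channel in `S`: a finite sequence of cells of `S` in which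
consecutive cells intersect. -/
def IsChannel {n : ℕ} (S : Set (Fin n → ℝ)) (N : ℕ) (c : ℕ → Set (Fin n → ℝ)) : Prop :=
  1 ≤ N ∧ (∀ i, 1 ≤ i → i ≤ N → IsCell S (c i)) ∧
    ∀ i, 1 ≤ i → i < N → (c i ∩ c (i + 1)).Nonempty

/-- The channel `c 1, …, c N` is a witness to reachability for `(H, x_s, x_t)`:
there are points `x_0 = x_s ∈ c 1`, `x_N = x_t ∈ c N`, `x_i ∈ c i ∩ c (i+1)` for
`1 ≤ i < N`, and nonnegative dwell times such that each `x_i` is reached from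
`x_{i-1}` by a nonnegative combination of the rate vectors. -/
def IsWitness {M : Type*} [Fintype M] {n : ℕ} (R : M → (Fin n → ℝ))
    (xs xt : Fin n → ℝ) (N : ℕ) (c : ℕ → Set (Fin n → ℝ)) : Prop :=
  ∃ x : ℕ → (Fin n → ℝ),
    x 0 = xs ∧ x N = xt ∧ x 0 ∈ c 1 ∧ x N ∈ c N ∧
    (∀ i, 1 ≤ i → i < N → x i ∈ c i ∩ c (i + 1)) ∧
    ∃ t : ℕ → M → ℝ, (∀ i m, 0 ≤ t i m) ∧
      ∀ i, 1 ≤ i → i ≤ N → x i = x (i - 1) + ∑ m, t i m • R m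

set_option linter.unusedVariables false

lemma runEnd_append {M V : Type*} [AddCommGroup V] [Module ℝ V] (R : M → V) :
    ∀ (σ τ : List (M × ℝ)) (x : V), runEnd R x (σ ++ τ) = runEnd R (runEnd R x σ) τ
  | [], τ, x => rfl
  | (m, t) :: σ, τ, x => by
      simp only [List.cons_append, runEnd]
      exact runEnd_append R σ τ _
lemma safeSched_append {M V : Type*} [AddCommGroup V] [Module ℝ V] (R : M → V) (S : Set V) :
    ∀ (σ τ : List (M × ℝ)) (x : V), SafeSched R S x σ → SafeSched R S (runEnd R x σ) τ →
      SafeSched R S x (σ ++ τ)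
  | [], τ, x, _, h => h
  | (m, t) :: σ, τ, x, h1, h2 => ⟨h1.1, safeSched_append R S σ τ _ h1.2 h2⟩
lemma safeSched_mono {M V : Type*} [AddCommGroup V] [Module ℝ V] (R : M → V) {S S' : Set V}
    (hss : S ⊆ S') :
    ∀ (σ : List (M × ℝ)) (x : V), SafeSched R S x σ → SafeSched R S' x σ
  | [], x, _ => trivial
  | (m, t) :: σ, x, h => ⟨fun τ hτ => hss (h.1 τ hτ), safeSched_mono R hss σ _ h.2⟩

lemma runEnd_eq_sum {M V : Type*} [AddCommGroup V] [Module ℝ V] (R : M → V) :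
    ∀ (σ : List (M × ℝ)) (x : V), runEnd R x σ = x + (σ.map (fun p => p.2 • R p.1)).sum
  | [], x => by simp [runEnd]
  | (m, t) :: σ, x => by
      simp only [runEnd, List.map_cons, List.sum_cons, runEnd_eq_sum R σ]
      abel

lemma roundSafe {M : Type*} {n : ℕ} (R : M → (Fin n → ℝ)) (c : Set (Fin n → ℝ))
    (s : M → ℝ) (hs : ∀ m, 0 ≤ s m) :
    ∀ (l : List M) (w : Fin n → ℝ),
      (∀ z : Fin n → ℝ, ‖z - w‖ ≤ (l.map (fun m => s m * ‖R m‖)).sum → z ∈ c) →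
      SafeSched R c w (l.map fun m => (m, s m))
  | [], w, h => trivial
  | m :: l, w, h => by
      have hrest : 0 ≤ (l.map (fun m => s m * ‖R m‖)).sum := by
        apply List.sum_nonneg
        intro a ha
        obtain ⟨m', _, rfl⟩ := List.mem_map.1 ha
        exact mul_nonneg (hs m') (norm_nonneg _)
      refine ⟨?_, ?_⟩
      · intro τ hτ
        apply h
        have he : w + τ • R m - w = τ • R m := by abel
        rw [he, norm_smul, Real.norm_of_nonneg hτ.1]
        simp only [List.map_cons, List.sum_cons]
        have h1 : τ * ‖R m‖ ≤ s m * ‖R m‖ :=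
          mul_le_mul_of_nonneg_right hτ.2 (norm_nonneg _)
        linarith
      · apply roundSafe R c s hs l
        intro z hz
        apply h
        have he : z - w = (z - (w + s m • R m)) + s m • R m := by abel
        rw [he]
        refine le_trans (norm_add_le _ _) ?_
        simp only [List.map_cons, List.sum_cons]
        rw [norm_smul, Real.norm_of_nonneg (hs m)]
        linarith

lemma linkSched {M : Type*} [Fintype M] {n : ℕ} (R : M → (Fin n → ℝ)) {c : Set (Fin n → ℝ)}
    (hco : IsOpen c) (hcc : Convex ℝ c) {a b : Fin n → ℝ} (ha : a ∈ c) (hb : b ∈ c)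
    (t : M → ℝ) (ht : ∀ m, 0 ≤ t m) (hab : b = a + ∑ m, t m • R m) :
    ∃ σ : List (M × ℝ), (∀ p ∈ σ, 0 ≤ p.2) ∧ SafeSched R c a σ ∧ runEnd R a σ = b := by
  have hL : segment ℝ a b ⊆ c := hcc.segment_subset ha hb
  have hcompact : IsCompact (segment ℝ a b) := by
    rw [segment_eq_image']
    exact isCompact_Icc.image (continuous_const.add (continuous_id.smul continuous_const))
  obtain ⟨δ, hδ, hthick⟩ := hcompact.exists_thickening_subset_open hco hL
  set C : ℝ := ∑ m, t m * ‖R m‖ with hC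
  have hC0 : 0 ≤ C := Finset.sum_nonneg fun m _ => mul_nonneg (ht m) (norm_nonneg _)
  obtain ⟨K0, hK0⟩ := exists_nat_gt (C / δ)
  set K : ℕ := K0 + 1 with hKdef
  have hKpos : (0 : ℝ) < (K : ℝ) := by positivity
  have hKne : (K : ℝ) ≠ 0 := ne_of_gt hKpos
  have hCK : C / (K : ℝ) < δ := by
    rw [div_lt_iff₀ hKpos]
    have h1 : C / δ < (K : ℝ) := lt_of_lt_of_le hK0 (by exact_mod_cast Nat.le_succ K0)
    have h2 : C < (K : ℝ) * δ := by
      rw [div_lt_iff₀ hδ] at h1; linarith [h1]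
    linarith
  set u : Fin n → ℝ := (K : ℝ)⁻¹ • (b - a) with hu
  have hba : b - a = ∑ m, t m • R m := by rw [hab]; abel
  have hsum : ∑ m, (t m / (K : ℝ)) • R m = u := by
    rw [hu, hba, Finset.smul_sum]
    refine Finset.sum_congr rfl fun m _ => ?_
    rw [smul_smul, div_eq_inv_mul]
  set ρ : List (M × ℝ) := (Finset.univ.toList (α := M)).map (fun m => (m, t m / (K : ℝ))) with hρ
  have hρnn : ∀ p ∈ ρ, 0 ≤ p.2 := by
    intro p hp
    obtain ⟨m, _, rfl⟩ := List.mem_map.1 hp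
    exact div_nonneg (ht m) (le_of_lt hKpos)
  have hρend : ∀ y : Fin n → ℝ, runEnd R y ρ = y + u := by
    intro y
    rw [runEnd_eq_sum, hρ, List.map_map]
    congr 1
    have : ((fun p : M × ℝ => p.2 • R p.1) ∘ fun m => (m, t m / (K : ℝ)))
        = fun m => (t m / (K : ℝ)) • R m := rfl
    rw [this, Finset.sum_map_toList, hsum]
  have hbudget : ((Finset.univ.toList (α := M)).map (fun m => (t m / (K : ℝ)) * ‖R m‖)).sum
      = C / (K : ℝ) := by
    rw [Finset.sum_map_toList]
    rw [hC, Finset.sum_div]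
    exact Finset.sum_congr rfl fun m _ => by ring
  have hρsafe : ∀ y ∈ segment ℝ a b, SafeSched R c y ρ := by
    intro y hy
    rw [hρ]
    apply roundSafe R c (fun m => t m / (K : ℝ)) (fun m => div_nonneg (ht m) (le_of_lt hKpos))
    intro z hz
    apply hthick
    rw [Metric.mem_thickening_iff]
    refine ⟨y, hy, ?_⟩
    rw [dist_eq_norm]
    calc ‖z - y‖ ≤ _ := hz
    _ = C / (K : ℝ) := hbudget
    _ < δ := hCK
  have hmemseg : ∀ j : ℕ, j ≤ K → a + (j : ℝ) • u ∈ segment ℝ a b := by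
    intro j hj
    rw [segment_eq_image']
    refine ⟨(j : ℝ) / K, ⟨by positivity, ?_⟩, ?_⟩
    · rw [div_le_one hKpos]; exact_mod_cast hj
    · show a + ((j : ℝ) / K) • (b - a) = a + (j : ℝ) • u
      rw [hu, smul_smul, div_eq_mul_inv]
  have main : ∀ k j : ℕ, j + k = K →
      SafeSched R c (a + (j : ℝ) • u) (List.flatten (List.replicate k ρ)) ∧
      runEnd R (a + (j : ℝ) • u) (List.flatten (List.replicate k ρ)) = a + ((j + k : ℕ) : ℝ) • u := by
    intro k
    induction k with
    | zero =>
        intro j hj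
        refine ⟨trivial, ?_⟩
        simp [runEnd]
    | succ k ih =>
        intro j hj
        have hj' : j ≤ K := by omega
        have hmem := hmemseg j hj'
        have hend : runEnd R (a + (j : ℝ) • u) ρ = a + ((j + 1 : ℕ) : ℝ) • u := by
          rw [hρend]
          push_cast
          rw [add_smul, one_smul]
          abel
        obtain ⟨s1, s2⟩ := ih (j + 1) (by omega)
        simp only [List.replicate_succ, List.flatten_cons]
        refine ⟨safeSched_append R c ρ _ _ (hρsafe _ hmem) ?_, ?_⟩
        · rw [hend]; exact s1
        · rw [runEnd_append, hend, s2]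
          congr 2
          push_cast
          ring
  obtain ⟨hsafe, hend⟩ := main K 0 (by omega)
  refine ⟨List.flatten (List.replicate K ρ), ?_, ?_, ?_⟩
  · intro p hp
    obtain ⟨l, hl, hpl⟩ := List.mem_flatten.1 hp
    exact hρnn p ((List.eq_of_mem_replicate hl) ▸ hpl)
  · simpa using hsafe
  · rw [show a + ((0 : ℕ) : ℝ) • u = a by simp] at hend
    rw [hend, hu]
    simp only [Nat.zero_add]
    rw [smul_smul, mul_inv_cancel₀ hKne, one_smul]
    abel
lemma segCell {n : ℕ} {S : Set (Fin n → ℝ)} (hS : IsOpen S) (a b : Fin n → ℝ)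
    (hseg : segment ℝ a b ⊆ S) :
    ∃ c0 : Set (Fin n → ℝ), IsCell S c0 ∧ a ∈ c0 ∧ b ∈ c0 := by
  have hcompact : IsCompact (segment ℝ a b) := by
    rw [segment_eq_image']
    exact isCompact_Icc.image (continuous_const.add (continuous_id.smul continuous_const))
  obtain ⟨δ, hδ, hthick⟩ := hcompact.exists_thickening_subset_open hS hseg
  exact ⟨Metric.thickening δ (segment ℝ a b),
    ⟨Metric.isOpen_thickening, (convex_segment a b).thickening δ, hthick⟩,
    Metric.self_subset_thickening hδ _ (left_mem_segment ℝ a b),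
    Metric.self_subset_thickening hδ _ (right_mem_segment ℝ a b)⟩

lemma fwd {M : Type*} [Fintype M] {n : ℕ} (R : M → (Fin n → ℝ)) (S : Set (Fin n → ℝ))
    (hS : IsOpen S) :
    ∀ (σ : List (M × ℝ)) (x : Fin n → ℝ), x ∈ S → (∀ p ∈ σ, 0 ≤ p.2) → SafeSched R S x σ →
      ∃ N c, IsChannel S N c ∧ IsWitness R x (runEnd R x σ) N c := by
  intro σ
  induction σ with
  | nil =>
    intro x hx _ _
    obtain ⟨c0, hcell, hac, _⟩ := segCell hS x x (by rw [segment_same]; simpa)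
    refine ⟨1, fun _ => c0, ⟨le_refl 1, fun i _ _ => hcell, fun i h1 h2 => absurd h2 (by omega)⟩,
      fun _ => x, rfl, rfl, hac, hac, fun i h1 h2 => absurd h2 (by omega),
      fun _ _ => 0, fun _ _ => le_refl 0, fun i _ _ => by simp⟩
  | cons p σ ih =>
    obtain ⟨m, t⟩ := p
    intro x hx hnn hsafe
    classical
    have ht : 0 ≤ t := hnn (m, t) List.mem_cons_self
    have hseg : segment ℝ x (x + t • R m) ⊆ S := by
      rw [segment_eq_image']
      rintro z ⟨θ, hθ, rfl⟩
      show x + θ • (x + t • R m - x) ∈ S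
      have he : x + θ • (x + t • R m - x) = x + (θ * t) • R m := by
        rw [add_sub_cancel_left, smul_smul]
      rw [he]
      refine hsafe.1 (θ * t) ⟨mul_nonneg hθ.1 ht, ?_⟩
      calc θ * t ≤ 1 * t := mul_le_mul_of_nonneg_right hθ.2 ht
      _ = t := one_mul t
    obtain ⟨c0, hc0, hx0c0, hx1c0⟩ := segCell hS x (x + t • R m) hseg
    have hx1S : x + t • R m ∈ S := hseg (right_mem_segment _ _ _)
    obtain ⟨N, c, hch, y, hy0, hyN, hy0c, hyNc, hymid, s, hs0, hsrec⟩ :=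
      ih (x + t • R m) hx1S (fun p hp => hnn p (List.mem_cons_of_mem _ hp)) hsafe.2
    have hN1 : 1 ≤ N := hch.1
    refine ⟨N + 1, fun i => if i ≤ 1 then c0 else c (i - 1), ⟨by omega, ?_, ?_⟩,
      fun i => if i = 0 then x else y (i - 1), ?_, ?_, ?_, ?_, ?_,
      fun i => if i ≤ 1 then (fun m' => if m' = m then t else 0) else s (i - 1), ?_, ?_⟩
    · -- cells
      intro i h1 h2
      dsimp only
      by_cases hi : i ≤ 1
      · rw [if_pos hi]; exact hc0
      · rw [if_neg hi]; exact hch.2.1 (i - 1) (by omega) (by omega)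
    · -- intersections
      intro i h1 h2
      dsimp only
      by_cases hi : i ≤ 1
      · have hi1 : i = 1 := by omega
        subst hi1
        rw [if_pos (le_refl 1), if_neg (by omega : ¬ (1 + 1 ≤ 1))]
        exact ⟨y 0, hy0 ▸ hx1c0, by simpa using hy0c⟩
      · rw [if_neg hi, if_neg (by omega : ¬ (i + 1 ≤ 1))]
        have : i + 1 - 1 = (i - 1) + 1 := by omega
        rw [this]
        exact hch.2.2 (i - 1) (by omega) (by omega)
    · -- x' 0 = x
      dsimp only
      rw [if_pos rfl]
    · -- x' (N+1) = runEnd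
      dsimp only
      rw [if_neg (by omega : ¬ (N + 1 = 0))]
      simpa [runEnd] using hyN
    · -- x' 0 ∈ c' 1
      dsimp only
      rw [if_pos rfl, if_pos (le_refl 1)]; exact hx0c0
    · -- x' (N+1) ∈ c' (N+1)
      dsimp only
      rw [if_neg (by omega : ¬ (N + 1 = 0)), if_neg (by omega : ¬ (N + 1 ≤ 1))]
      simpa using hyNc
    · -- mid
      intro i h1 h2
      dsimp only
      rw [if_neg (by omega : ¬ (i = 0))]
      by_cases hi : i ≤ 1
      · have hi1 : i = 1 := by omega
        subst hi1
        rw [if_pos (le_refl 1), if_neg (by omega : ¬ (1 + 1 ≤ 1))]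
        exact ⟨hy0 ▸ hx1c0, by simpa using hy0c⟩
      · rw [if_neg hi, if_neg (by omega : ¬ (i + 1 ≤ 1))]
        have he : i + 1 - 1 = (i - 1) + 1 := by omega
        rw [he]
        exact hymid (i - 1) (by omega) (by omega)
    · -- times nonneg
      intro i m'
      dsimp only
      split_ifs with h1
      · dsimp only
        split_ifs with h2
        · exact ht
        · exact le_rfl
      · exact hs0 _ _
    · -- recurrence
      intro i h1 h2
      dsimp only
      by_cases hi : i ≤ 1
      · have hi1 : i = 1 := by omega
        subst hi1
        rw [if_neg (by omega : ¬ (1 = 0)), if_pos (by omega : 1 - 1 = 0), if_pos (le_refl 1)]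
        have hsum : ∑ m', (if m' = m then t else 0) • R m' = t • R m := by
          have he : ∀ m' : M, (if m' = m then t else 0) • R m'
              = if m' = m then t • R m' else 0 := by
            intro m'; split_ifs <;> simp
          rw [Finset.sum_congr rfl fun m' _ => he m', Finset.sum_ite_eq' Finset.univ m,
            if_pos (Finset.mem_univ m)]
        rw [hsum]
        simpa using hy0
      · rw [if_neg (by omega : ¬ (i = 0)), if_neg (by omega : ¬ (i - 1 = 0)), if_neg hi]
        have he : i - 1 - 1 = (i - 1) - 1 := rfl
        exact hsrec (i - 1) (by omega) (by omega)

lemma bwd {M : Type*} [Fintype M] {n : ℕ} (R : M → (Fin n → ℝ)) (S : Set (Fin n → ℝ))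
    (xt : Fin n → ℝ) :
    ∀ (N : ℕ) (c : ℕ → Set (Fin n → ℝ)) (xs : Fin n → ℝ),
      IsChannel S N c → IsWitness R xs xt N c →
      ∃ σ : List (M × ℝ), (∀ p ∈ σ, 0 ≤ p.2) ∧ SafeSched R S xs σ ∧ runEnd R xs σ = xt := by
  intro N
  induction N with
  | zero => intro c xs hch _; exact absurd hch.1 (by omega)
  | succ N ih =>
    intro c xs hch hwit
    obtain ⟨x, hx0, hxN, hx0c, hxNc, hmid, t, ht0, hrec⟩ := hwit
    subst hx0
    obtain ⟨_, hcell, hint⟩ := hch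
    have hc1 : IsCell S (c 1) := hcell 1 (le_refl 1) (by omega)
    have hx1c1 : x 1 ∈ c 1 := by
      rcases Nat.eq_zero_or_pos N with h0 | hpos
      · subst h0; exact hxNc
      · exact (hmid 1 (le_refl 1) (by omega)).1
    obtain ⟨σ1, hσ1nn, hσ1safe, hσ1end⟩ :=
      linkSched R hc1.1 hc1.2.1 hx0c hx1c1 (t 1) (ht0 1) (hrec 1 (le_refl 1) (by omega))
    rcases Nat.eq_zero_or_pos N with h0 | hpos
    · subst h0
      exact ⟨σ1, hσ1nn, safeSched_mono R hc1.2.2 σ1 _ hσ1safe, hσ1end.trans hxN⟩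
    · have hch' : IsChannel S N (fun i => c (i + 1)) :=
        ⟨hpos, fun i hi1 hi2 => hcell (i + 1) (by omega) (by omega),
          fun i hi1 hi2 => hint (i + 1) (by omega) (by omega)⟩
      have hwit' : IsWitness R (x 1) xt N (fun i => c (i + 1)) := by
        refine ⟨fun i => x (i + 1), rfl, hxN, (hmid 1 (le_refl 1) (by omega)).2, hxNc,
          fun i hi1 hi2 => hmid (i + 1) (by omega) (by omega),
          fun i => t (i + 1), fun i m => ht0 (i + 1) m, ?_⟩
        intro i hi1 hi2
        have he : i - 1 + 1 = i := by omega
        have := hrec (i + 1) (by omega) (by omega)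
        simpa [he] using this
      obtain ⟨σ2, h2nn, h2safe, h2end⟩ := ih (fun i => c (i + 1)) (x 1) hch' hwit'
      refine ⟨σ1 ++ σ2, ?_, ?_, ?_⟩
      · intro p hp
        rcases List.mem_append.1 hp with h | h
        exacts [hσ1nn p h, h2nn p h]
      · refine safeSched_append R S σ1 σ2 _ (safeSched_mono R hc1.2.2 σ1 _ hσ1safe) ?_
        rw [hσ1end]; exact h2safe
      · rw [runEnd_append, hσ1end, h2end]


/-- For an open safety set `S`, there is a finite `S`-safe schedule steering the
multi-mode system from `x_s` to `x_t` iff `S` contains a witness channel for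
`(H, x_s, x_t)`. -/
theorem stmt3 {M : Type*} [Fintype M] [Nonempty M] {n : ℕ} (hn : 0 < n)
    (R : M → (Fin n → ℝ)) (S : Set (Fin n → ℝ)) (hSopen : IsOpen S)
    (xs xt : Fin n → ℝ) (hxs : xs ∈ S) (hxt : xt ∈ S) :
    (∃ σ : List (M × ℝ), (∀ p ∈ σ, 0 ≤ p.2) ∧ SafeSched R S xs σ ∧ runEnd R xs σ = xt) ↔
      (∃ (N : ℕ) (c : ℕ → Set (Fin n → ℝ)), IsChannel S N c ∧ IsWitness R xs xt N c) := by
  constructor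
  · rintro ⟨σ, hnn, hsafe, hend⟩
    obtain ⟨N, c, hch, hwit⟩ := fwd R S hSopen σ xs hxs hnn hsafe
    exact ⟨N, c, hch, hend ▸ hwit⟩
  · rintro ⟨N, c, hch, hwit⟩
    exact bwd R S xt N c xs hch hwit
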